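/- Let M, T be real numbers with T ≥ 3 and 0 < β < 1. Then ∑_{1 ≤ n ≤ T} n^(−1/2) · min(T^β, 1/|log(M/n)|) ≤ C·max(T^β, T^(1/2)·log T) for an absolute constant C (independent of M), where terms with log(M/n) = 0 contribute T^β. -/

import Mathlib

open Real


lemma sum_inv_sqrt_le (N : ℕ) : ∑ n ∈ Finset.Icc 1 N, (Real.sqrt n)⁻¹ ≤ 2 * Real.sqrt N := by
  induction N with
  | zero => simp
  | succ N ih =>
    rw [Finset.sum_Icc_succ_top (by omega)]
    have hb : (0:ℝ) < Real.sqrt ((N:ℝ)+1) := by positivity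
    have ha : (0:ℝ) ≤ Real.sqrt N := Real.sqrt_nonneg _
    have ha2 : Real.sqrt N ^ 2 = N := Real.sq_sqrt (by positivity)
    have hb2 : Real.sqrt ((N:ℝ)+1) ^ 2 = (N:ℝ)+1 := Real.sq_sqrt (by positivity)
    have key : (Real.sqrt ((N:ℝ)+1))⁻¹ ≤ 2 * Real.sqrt ((N:ℝ)+1) - 2 * Real.sqrt N := by
      rw [inv_le_iff_one_le_mul₀ hb]
      nlinarith [sq_nonneg (Real.sqrt ((N:ℝ)+1) - Real.sqrt N)]
    push_cast
    linarith

lemma sum_inv_le_log (N : ℕ) : ∑ m ∈ Finset.range N, ((m:ℝ)+1)⁻¹ ≤ 1 + Real.log N := by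
  induction N with
  | zero => simp
  | succ N ih =>
    rcases Nat.eq_zero_or_pos N with h | h
    · subst h; simp
    · have hN : (0:ℝ) < N := by exact_mod_cast h
      rw [Finset.sum_range_succ]
      have hlog : Real.log N + ((N:ℝ)+1)⁻¹ ≤ Real.log ((N:ℝ)+1) := by
        have h1 := Real.log_le_sub_one_of_pos (x := (N:ℝ)/((N:ℝ)+1)) (by positivity)
        rw [Real.log_div (by positivity) (by positivity)] at h1
        have h2 : (N:ℝ)/((N:ℝ)+1) - 1 = -((N:ℝ)+1)⁻¹ := by field_simp; ring
        linarith
      push_cast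
      linarith

lemma abs_log_ge (y : ℝ) (hy : 0 < y) (hy2 : y ≤ 2) : |y - 1| / 2 ≤ |Real.log y| := by
  rcases le_or_gt 1 y with h | h
  · rw [abs_of_nonneg (by linarith : (0:ℝ) ≤ y - 1), abs_of_nonneg (Real.log_nonneg h)]
    have h1 := Real.log_le_sub_one_of_pos (x := y⁻¹) (by positivity)
    rw [Real.log_inv] at h1
    have hyi : y⁻¹ * y = 1 := inv_mul_cancel₀ (by positivity)
    nlinarith
  · rw [abs_of_neg (by linarith : y - 1 < 0), abs_of_neg (Real.log_neg hy h)]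
    have := Real.log_le_sub_one_of_pos hy
    linarith

lemma side_sum (s : Finset ℕ) (N : ℕ) (e : ℕ → ℕ) (c : ℝ) (hc : 0 ≤ c)
    (hinj : ∀ n ∈ s, ∀ n' ∈ s, e n = e n' → n = n')
    (hrange : ∀ n ∈ s, e n < N) (F : ℕ → ℝ)
    (hF : ∀ n ∈ s, F n ≤ c * ((e n : ℝ) + 1)⁻¹) :
    ∑ n ∈ s, F n ≤ c * (1 + Real.log N) := by
  calc ∑ n ∈ s, F n ≤ ∑ n ∈ s, c * ((e n:ℝ)+1)⁻¹ := Finset.sum_le_sum hF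
    _ = c * ∑ n ∈ s, ((e n:ℝ)+1)⁻¹ := by rw [Finset.mul_sum]
    _ = c * ∑ m ∈ s.image e, ((m:ℝ)+1)⁻¹ := by rw [Finset.sum_image hinj]
    _ ≤ c * ∑ m ∈ Finset.range N, ((m:ℝ)+1)⁻¹ := by
        refine mul_le_mul_of_nonneg_left
          (Finset.sum_le_sum_of_subset_of_nonneg ?_ (fun _ _ _ => by positivity)) hc
        intro m hm
        obtain ⟨n, hn, rfl⟩ := Finset.mem_image.mp hm
        exact Finset.mem_range.mpr (hrange n hn)
    _ ≤ c * (1 + Real.log N) := mul_le_mul_of_nonneg_left (sum_inv_le_log N) hc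

lemma pointwise_bound (M T β : ℝ) (hM : 0 < M) (hTb : 0 < T ^ β) (n : ℕ) (hn1 : 1 ≤ n) :
    (Real.sqrt n)⁻¹ *
        (if Real.log (M / n) = 0 then T ^ β
         else min (T ^ β) (1 / |Real.log (M / n)|)) ≤
      (Real.sqrt n)⁻¹ * (Real.log 2)⁻¹
      + (if |(n:ℝ) - M| < 1 then T ^ β else 0)
      + (if 1 ≤ |(n:ℝ) - M| ∧ M < 2 * (n:ℝ) then 2 * Real.sqrt n / |(n:ℝ) - M| else 0) := by
  have hnR : (1:ℝ) ≤ n := by exact_mod_cast hn1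
  have hn0 : (0:ℝ) < n := by linarith
  have hs1 : 1 ≤ Real.sqrt n := by
    rw [show (1:ℝ) = Real.sqrt 1 by simp]
    exact Real.sqrt_le_sqrt hnR
  have hs0 : (0:ℝ) < Real.sqrt n := by linarith
  have hsi : (Real.sqrt n)⁻¹ ≤ 1 := by
    rw [← one_div, div_le_one hs0]; exact hs1
  have hlog2pos : (0:ℝ) < Real.log 2 := Real.log_pos (by norm_num)
  have hg0 : (0:ℝ) ≤ (Real.sqrt n)⁻¹ * (Real.log 2)⁻¹ := by positivity
  have hp0 : (0:ℝ) ≤ (if |(n:ℝ) - M| < 1 then T ^ β else 0) := by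
    split_ifs; exacts [hTb.le, le_rfl]
  have hh0 : (0:ℝ) ≤ (if 1 ≤ |(n:ℝ) - M| ∧ M < 2 * (n:ℝ) then 2 * Real.sqrt n / |(n:ℝ) - M| else 0) := by
    split_ifs with hc
    · have : (0:ℝ) < |(n:ℝ) - M| := by linarith [hc.1]
      positivity
    · exact le_rfl
  by_cases hlog : Real.log (M / n) = 0
  · rw [if_pos hlog]
    have hMn0 : 0 < M / n := by positivity
    have hMn : M / n = 1 := by
      rcases Real.log_eq_zero.mp hlog with h | h | h
      · exact absurd h (ne_of_gt hMn0)
      · exact h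
      · linarith
    have hMeq : M = n := by
      field_simp at hMn; linarith
    have hpn : |(n:ℝ) - M| < 1 := by rw [hMeq]; simp
    rw [if_pos hpn]
    have hb : (Real.sqrt n)⁻¹ * T ^ β ≤ T ^ β := mul_le_of_le_one_left hTb.le hsi
    linarith
  · rw [if_neg hlog]
    have hL0 : 0 < |Real.log (M / n)| := abs_pos.mpr hlog
    rcases le_or_gt (Real.log 2) |Real.log (M / n)| with hL2 | hL2
    · have hmin : min (T ^ β) (1 / |Real.log (M / n)|) ≤ (Real.log 2)⁻¹ := by
        refine (min_le_right _ _).trans ?_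
        rw [one_div]
        exact inv_anti₀ hlog2pos hL2
      have hmin0 : (0:ℝ) ≤ min (T ^ β) (1 / |Real.log (M / n)|) :=
        le_min hTb.le (by positivity)
      have := mul_le_mul_of_nonneg_left hmin (inv_nonneg.2 hs0.le)
      linarith
    · -- |log(M/n)| < log 2
      have hMn0 : 0 < M / n := by positivity
      have hMn2 : M / n < 2 := by
        have hx : Real.log (M / n) < Real.log 2 := lt_of_le_of_lt (le_abs_self _) hL2
        by_contra hcon
        push_neg at hcon
        exact absurd (Real.log_le_log (by norm_num) hcon) (not_le.mpr hx)
      have hMn2' : (1:ℝ)/2 < M / n := by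
        by_contra hcon
        push_neg at hcon
        have hx : Real.log (M / n) ≤ Real.log (1/2) := Real.log_le_log hMn0 hcon
        rw [Real.log_div one_ne_zero (by norm_num), Real.log_one] at hx
        have : -|Real.log (M / n)| ≤ Real.log (M / n) := neg_abs_le _
        linarith
      have hMlt : M < 2 * (n:ℝ) := by
        rw [div_lt_iff₀ hn0] at hMn2; linarith
      rcases lt_or_ge (|(n:ℝ) - M|) 1 with hd | hd
      · rw [if_pos hd]
        have h1 : min (T ^ β) (1 / |Real.log (M / n)|) ≤ T ^ β := min_le_left _ _
        have hmin0 : (0:ℝ) ≤ min (T ^ β) (1 / |Real.log (M / n)|) :=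
          le_min hTb.le (by positivity)
        have h2 : (Real.sqrt n)⁻¹ * min (T ^ β) (1 / |Real.log (M / n)|) ≤ T ^ β := by
          calc (Real.sqrt n)⁻¹ * min (T ^ β) (1 / |Real.log (M / n)|)
              ≤ 1 * T ^ β := mul_le_mul hsi h1 hmin0 one_pos.le
            _ = T ^ β := one_mul _
        linarith
      · rw [if_neg (not_lt.mpr hd), if_pos ⟨hd, hMlt⟩]
        have hA := abs_log_ge (M / n) hMn0 hMn2.le
        have he : |M / n - 1| = |(n:ℝ) - M| / n := by
          rw [show M / (n:ℝ) - 1 = (M - n) / n by field_simp, abs_div, abs_of_pos hn0,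
            abs_sub_comm]
        rw [he] at hA
        have hd0 : (0:ℝ) < |(n:ℝ) - M| := by linarith
        have h' : |(n:ℝ) - M| ≤ |Real.log (M / n)| * ((n:ℝ) * 2) := by
          rwa [div_div, div_le_iff₀ (by positivity)] at hA
        have hkey : 1 / |Real.log (M / n)| ≤ 2 * (n:ℝ) / |(n:ℝ) - M| := by
          rw [div_le_div_iff₀ hL0 hd0]
          nlinarith
        have hmul := mul_le_mul_of_nonneg_left ((min_le_right (T ^ β) (1 / |Real.log (M / n)|)).trans hkey)
          (inv_nonneg.2 hs0.le)
        have hid : (Real.sqrt n)⁻¹ * (2 * (n:ℝ) / |(n:ℝ) - M|) =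
            2 * Real.sqrt n / |(n:ℝ) - M| := by
          field_simp
          nlinarith [Real.mul_self_sqrt hn0.le]
        rw [hid] at hmul
        linarith


set_option maxHeartbeats 1600000 in
theorem resonator_small_t_sum_bound :
    ∃ C > 0, ∀ (M T β : ℝ), 0 < M → 3 ≤ T → 0 < β → β < 1 →
      ∑ n ∈ Finset.Icc 1 ⌊T⌋₊,
          (Real.sqrt n)⁻¹ *
            (if Real.log (M / n) = 0 then T ^ β
             else min (T ^ β) (1 / |Real.log (M / n)|)) ≤
        C * max (T ^ β) (T ^ ((1 : ℝ) / 2) * Real.log T) := by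
  refine ⟨100, by norm_num, ?_⟩
  intro M T β hM hT hβ hβ1
  set N := ⌊T⌋₊ with hNdef
  have hT0 : (0:ℝ) < T := by linarith
  have hNT : (N:ℝ) ≤ T := Nat.floor_le hT0.le
  have hlogT : 1 ≤ Real.log T := by
    rw [Real.le_log_iff_exp_le hT0]
    have := Real.exp_one_lt_d9
    linarith
  have hlog2pos : (0:ℝ) < Real.log 2 := Real.log_pos (by norm_num)
  have hlog2le : Real.log 2 ≤ 1 := by
    have := Real.log_two_lt_d9; linarith
  have hlog3 : Real.log 3 ≤ Real.log T := Real.log_le_log (by norm_num) hT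
  have hTb : 0 < T ^ β := Real.rpow_pos_of_pos hT0 β
  have hsT0 : (0:ℝ) ≤ Real.sqrt T := Real.sqrt_nonneg T
  set R := max (T ^ β) (T ^ ((1:ℝ)/2) * Real.log T) with hRdef
  have hR1 : T ^ β ≤ R := le_max_left _ _
  have hR2 : Real.sqrt T * Real.log T ≤ R := by
    rw [hRdef, Real.sqrt_eq_rpow]
    exact le_max_right _ _
  have hR0 : (0:ℝ) ≤ R := hTb.le.trans hR1
  -- pointwise bound
  have hsum1 : ∑ n ∈ Finset.Icc 1 N,
      (Real.sqrt n)⁻¹ *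
        (if Real.log (M / n) = 0 then T ^ β
         else min (T ^ β) (1 / |Real.log (M / n)|)) ≤
      ∑ n ∈ Finset.Icc 1 N, ((Real.sqrt n)⁻¹ * (Real.log 2)⁻¹
        + (if |(n:ℝ) - M| < 1 then T ^ β else 0)
        + (if 1 ≤ |(n:ℝ) - M| ∧ M < 2 * (n:ℝ) then 2 * Real.sqrt n / |(n:ℝ) - M| else 0)) := by
    refine Finset.sum_le_sum fun n hn => ?_
    exact pointwise_bound M T β hM hTb n (Finset.mem_Icc.mp hn).1
  rw [Finset.sum_add_distrib, Finset.sum_add_distrib] at hsum1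
  -- g part
  have hg : ∑ n ∈ Finset.Icc 1 N, (Real.sqrt n)⁻¹ * (Real.log 2)⁻¹
      ≤ 3 * (Real.sqrt T * Real.log T) := by
    rw [← Finset.sum_mul]
    have h1 : ∑ n ∈ Finset.Icc 1 N, (Real.sqrt (n:ℝ))⁻¹ ≤ 2 * Real.sqrt T :=
      (sum_inv_sqrt_le N).trans (by
        have := Real.sqrt_le_sqrt hNT
        linarith)
    have h2 : (Real.log 2)⁻¹ ≤ 3/2 := by
      have h23 : (2:ℝ)/3 ≤ Real.log 2 := by
        have := Real.log_two_gt_d9; linarith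
      calc (Real.log 2)⁻¹ ≤ ((2:ℝ)/3)⁻¹ := inv_anti₀ (by norm_num) h23
        _ = 3/2 := by norm_num
    have hs0 : (0:ℝ) ≤ ∑ n ∈ Finset.Icc 1 N, (Real.sqrt (n:ℝ))⁻¹ :=
      Finset.sum_nonneg fun n _ => by positivity
    calc (∑ n ∈ Finset.Icc 1 N, (Real.sqrt (n:ℝ))⁻¹) * (Real.log 2)⁻¹
        ≤ (2 * Real.sqrt T) * (3/2) := mul_le_mul h1 h2 (by positivity) (by positivity)
      _ = 3 * Real.sqrt T := by ring
      _ ≤ 3 * (Real.sqrt T * Real.log T) := by nlinarith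
  -- p part
  have hp : ∑ n ∈ Finset.Icc 1 N, (if |(n:ℝ) - M| < 1 then T ^ β else 0) ≤ 2 * T ^ β := by
    rw [← Finset.sum_filter, Finset.sum_const, nsmul_eq_mul]
    have hsub : (Finset.Icc 1 N).filter (fun n : ℕ => |(n:ℝ) - M| < 1) ⊆
        Finset.Icc ⌊M⌋₊ (⌊M⌋₊ + 1) := by
      intro n hn
      obtain ⟨-, hcond⟩ := Finset.mem_filter.mp hn
      have h1 := abs_lt.mp hcond
      have hfl : (⌊M⌋₊:ℝ) ≤ M := Nat.floor_le hM.le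
      have hfu : M < (⌊M⌋₊:ℝ) + 1 := Nat.lt_floor_add_one M
      rw [Finset.mem_Icc]
      constructor
      · have h : (⌊M⌋₊:ℝ) < (n:ℝ) + 1 := by linarith
        have h' : ⌊M⌋₊ < n + 1 := by exact_mod_cast h
        omega
      · have h : (n:ℝ) < (⌊M⌋₊:ℝ) + 2 := by linarith
        have h' : n < ⌊M⌋₊ + 2 := by exact_mod_cast h
        omega
    have hcard : (((Finset.Icc 1 N).filter (fun n : ℕ => |(n:ℝ) - M| < 1)).card : ℝ) ≤ 2 := by
      have : ((Finset.Icc 1 N).filter (fun n : ℕ => |(n:ℝ) - M| < 1)).card ≤ 2 := by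
        calc _ ≤ (Finset.Icc ⌊M⌋₊ (⌊M⌋₊ + 1)).card := Finset.card_le_card hsub
          _ = 2 := by rw [Nat.card_Icc]; omega
      exact_mod_cast this
    nlinarith
  -- h part
  have hlogN1 : 1 + Real.log ((N+1 : ℕ):ℝ) ≤ 3 * Real.log T := by
    have hle : ((N+1 : ℕ):ℝ) ≤ 2 * T := by push_cast; linarith
    have h1 : Real.log ((N+1 : ℕ):ℝ) ≤ Real.log (2 * T) :=
      Real.log_le_log (by positivity) hle
    rw [Real.log_mul two_ne_zero hT0.ne'] at h1
    linarith
  have hlogN2 : 1 + Real.log ((2*N+1 : ℕ):ℝ) ≤ 3 * Real.log T := by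
    have hle : ((2*N+1 : ℕ):ℝ) ≤ 3 * T := by push_cast; linarith
    have h1 : Real.log ((2*N+1 : ℕ):ℝ) ≤ Real.log (3 * T) :=
      Real.log_le_log (by positivity) hle
    rw [Real.log_mul three_ne_zero hT0.ne'] at h1
    linarith
  have hh : ∑ n ∈ Finset.Icc 1 N,
      (if 1 ≤ |(n:ℝ) - M| ∧ M < 2 * (n:ℝ) then 2 * Real.sqrt n / |(n:ℝ) - M| else 0) ≤
      24 * (Real.sqrt T * Real.log T) := by
    rw [← Finset.sum_filter]
    set s := (Finset.Icc 1 N).filter (fun n : ℕ => 1 ≤ |(n:ℝ) - M| ∧ M < 2 * (n:ℝ)) with hsdef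
    have hmem : ∀ n ∈ s, (1 ≤ n ∧ n ≤ N) ∧ 1 ≤ |(n:ℝ) - M| ∧ M < 2 * (n:ℝ) := by
      intro n hn
      exact ⟨Finset.mem_Icc.mp (Finset.mem_filter.mp hn).1, (Finset.mem_filter.mp hn).2⟩
    rw [← Finset.sum_filter_add_sum_filter_not s (fun n : ℕ => M ≤ (n:ℝ))]
    have hside1 : ∑ n ∈ s.filter (fun n : ℕ => M ≤ (n:ℝ)), 2 * Real.sqrt n / |(n:ℝ) - M| ≤
        4 * Real.sqrt T * (1 + Real.log ((N+1 : ℕ):ℝ)) := by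
      refine side_sum _ (N + 1) (fun n => n - ⌈M⌉₊) (4 * Real.sqrt T) (by positivity) ?_ ?_ _ ?_
      · intro n hn n' hn' hee
        have h1 : ⌈M⌉₊ ≤ n := Nat.ceil_le.mpr (Finset.mem_filter.mp hn).2
        have h2 : ⌈M⌉₊ ≤ n' := Nat.ceil_le.mpr (Finset.mem_filter.mp hn').2
        omega
      · intro n hn
        have h1 : n ≤ N := (hmem n (Finset.mem_filter.mp hn).1).1.2
        omega
      · intro n hn
        obtain ⟨hns, hMn⟩ := Finset.mem_filter.mp hn
        obtain ⟨⟨hn1, hnN⟩, hd, hM2n⟩ := hmem n hns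
        have hceil : ⌈M⌉₊ ≤ n := Nat.ceil_le.mpr hMn
        have hcast : ((n - ⌈M⌉₊ : ℕ):ℝ) = (n:ℝ) - (⌈M⌉₊:ℝ) := by
          push_cast [Nat.cast_sub hceil]; ring
        have hMceil : M ≤ (⌈M⌉₊:ℝ) := Nat.le_ceil M
        have habs : |(n:ℝ) - M| = (n:ℝ) - M := abs_of_nonneg (by linarith)
        rw [habs] at hd ⊢
        have hd0 : (0:ℝ) < (n:ℝ) - M := by linarith
        have ha0 : (0:ℝ) < ((n - ⌈M⌉₊ : ℕ):ℝ) + 1 := by positivity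
        have hkey : ((n - ⌈M⌉₊ : ℕ):ℝ) + 1 ≤ 2 * ((n:ℝ) - M) := by
          rw [hcast]; linarith
        have hsqn : Real.sqrt n ≤ Real.sqrt T := Real.sqrt_le_sqrt (by
          have : (n:ℝ) ≤ (N:ℝ) := by exact_mod_cast hnN
          linarith)
        rw [← div_eq_mul_inv, div_le_div_iff₀ hd0 ha0]
        nlinarith [mul_le_mul_of_nonneg_left hkey hsT0,
          mul_le_mul_of_nonneg_right hsqn ha0.le]
    have hside2 : ∑ n ∈ s.filter (fun n : ℕ => ¬ M ≤ (n:ℝ)), 2 * Real.sqrt n / |(n:ℝ) - M| ≤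
        4 * Real.sqrt T * (1 + Real.log ((2*N+1 : ℕ):ℝ)) := by
      refine side_sum _ (2*N + 1) (fun n => ⌊M⌋₊ - n) (4 * Real.sqrt T) (by positivity) ?_ ?_ _ ?_
      · intro n hn n' hn' hee
        have h1 : n ≤ ⌊M⌋₊ :=
          Nat.le_floor (le_of_lt (not_le.mp (Finset.mem_filter.mp hn).2))
        have h2 : n' ≤ ⌊M⌋₊ :=
          Nat.le_floor (le_of_lt (not_le.mp (Finset.mem_filter.mp hn').2))
        omega
      · intro n hn
        obtain ⟨⟨hn1, hnN⟩, hd, hM2n⟩ := hmem n (Finset.mem_filter.mp hn).1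
        have hM2N : M ≤ ((2*N : ℕ):ℝ) := by
          have : (n:ℝ) ≤ (N:ℝ) := by exact_mod_cast hnN
          push_cast
          linarith
        have hfl : ⌊M⌋₊ ≤ 2*N := by
          calc ⌊M⌋₊ ≤ ⌊((2*N : ℕ):ℝ)⌋₊ := Nat.floor_le_floor hM2N
            _ = 2*N := Nat.floor_natCast _
        omega
      · intro n hn
        obtain ⟨hns, hMn⟩ := Finset.mem_filter.mp hn
        obtain ⟨⟨hn1, hnN⟩, hd, hM2n⟩ := hmem n hns
        have hlt : (n:ℝ) < M := not_le.mp hMn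
        have hfloor : n ≤ ⌊M⌋₊ := Nat.le_floor hlt.le
        have hcast : ((⌊M⌋₊ - n : ℕ):ℝ) = (⌊M⌋₊:ℝ) - (n:ℝ) := by
          push_cast [Nat.cast_sub hfloor]; ring
        have hfl : (⌊M⌋₊:ℝ) ≤ M := Nat.floor_le hM.le
        have habs : |(n:ℝ) - M| = M - (n:ℝ) := by
          rw [abs_of_neg (by linarith : (n:ℝ) - M < 0)]; ring
        rw [habs] at hd ⊢
        have hd0 : (0:ℝ) < M - (n:ℝ) := by linarith
        have ha0 : (0:ℝ) < ((⌊M⌋₊ - n : ℕ):ℝ) + 1 := by positivity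
        have hkey : ((⌊M⌋₊ - n : ℕ):ℝ) + 1 ≤ 2 * (M - (n:ℝ)) := by
          rw [hcast]; linarith
        have hsqn : Real.sqrt n ≤ Real.sqrt T := Real.sqrt_le_sqrt (by
          have : (n:ℝ) ≤ (N:ℝ) := by exact_mod_cast hnN
          linarith)
        rw [← div_eq_mul_inv, div_le_div_iff₀ hd0 ha0]
        nlinarith [mul_le_mul_of_nonneg_left hkey hsT0,
          mul_le_mul_of_nonneg_right hsqn ha0.le]
    have hb1 : 4 * Real.sqrt T * (1 + Real.log ((N+1 : ℕ):ℝ)) ≤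
        4 * Real.sqrt T * (3 * Real.log T) :=
      mul_le_mul_of_nonneg_left hlogN1 (by positivity)
    have hb2 : 4 * Real.sqrt T * (1 + Real.log ((2*N+1 : ℕ):ℝ)) ≤
        4 * Real.sqrt T * (3 * Real.log T) :=
      mul_le_mul_of_nonneg_left hlogN2 (by positivity)
    nlinarith
  linarith
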